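/- Let G be an abelian topological group and U a quasi-convex neighbourhood of 0. Then the family {(1/n)U : n ∈ N} satisfies the axioms of a neighbourhood basis at 0 for a group topology on G; in particular (1/(2n))U + (1/(2n))U ⊆ (1/n)U for all n. -/

import Mathlib

open Pointwise

/-- `T₊ = [-1/4, 1/4] + ℤ` inside the circle `𝕋 = ℝ/ℤ`. -/
def Tpos : Set (AddCircle (1 : ℝ)) :=
  {x | ∃ r : ℝ, |r| ≤ 1 / 4 ∧ (r : AddCircle (1 : ℝ)) = x}

/-- Quasi-convexity of a subset of an abelian topological group. -/
def QuasiConvex {G : Type*} [AddCommGroup G] [TopologicalSpace G] (A : Set G) : Prop :=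
  ∀ x ∉ A, ∃ χ : ContinuousAddMonoidHom G (AddCircle (1 : ℝ)),
    (∀ a ∈ A, χ a ∈ Tpos) ∧ χ x ∉ Tpos

/-- `(1/n)U = {x : kx ∈ U for 1 ≤ k ≤ n}`. -/
def oneOver {G : Type*} [AddCommGroup G] (n : ℕ) (U : Set G) : Set G :=
  {x : G | ∀ k : ℕ, 1 ≤ k → k ≤ n → k • x ∈ U}

lemma coe_eq_coe' {r s : ℝ} (h : (r : AddCircle (1:ℝ)) = s) : ∃ z : ℤ, r - s = z := by
  have h0 : ((r - s : ℝ) : AddCircle (1:ℝ)) = 0 := by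
    have : ((r - s : ℝ) : AddCircle (1:ℝ)) = (r : AddCircle (1:ℝ)) - (s : AddCircle (1:ℝ)) :=
      map_sub (QuotientAddGroup.mk' (AddSubgroup.zmultiples (1:ℝ))) r s
    rw [this, h, sub_self]
  rcases (AddCircle.coe_eq_zero_iff (1:ℝ)).1 h0 with ⟨z, hz⟩
  exact ⟨z, by simpa using hz.symm⟩

lemma nsmul_coe (j : ℕ) (r : ℝ) : (j : ℕ) • ((r : AddCircle (1:ℝ))) = ((j * r : ℝ) : AddCircle (1:ℝ)) := by
  have := (map_nsmul (QuotientAddGroup.mk' (AddSubgroup.zmultiples (1:ℝ))) j r).symm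
  simpa [nsmul_eq_mul] using this

lemma tpos_chain (t : AddCircle (1:ℝ)) :
    ∀ m : ℕ, 1 ≤ m → (∀ j : ℕ, 1 ≤ j → j ≤ m → j • t ∈ Tpos) →
    ∃ r : ℝ, |r| ≤ 1 / (4 * m) ∧ (r : AddCircle (1:ℝ)) = t := by
  intro m
  induction m with
  | zero => omega
  | succ m ih =>
    intro _ h
    rcases Nat.eq_zero_or_pos m with hm | hm
    · subst hm
      have := h 1 le_rfl le_rfl
      simp only [one_smul] at this
      rcases this with ⟨r, hr, e⟩
      exact ⟨r, by norm_num [hr], e⟩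
    · rcases ih hm (fun j h1 h2 => h j h1 (by omega)) with ⟨r, hr, e⟩
      rcases h (m+1) (by omega) le_rfl with ⟨s, hs, es⟩
      rw [← e, nsmul_coe] at es
      rcases coe_eq_coe' es with ⟨z, hz⟩
      have hm1 : (1:ℝ) ≤ m := by exact_mod_cast hm
      have hmr : |((m:ℝ)+1) * r| ≤ 1/2 := by
        rw [abs_mul, abs_of_pos (by positivity : (0:ℝ) < (m:ℝ)+1)]
        rw [le_div_iff₀ (by positivity : (0:ℝ) < 4*m)] at hr
        nlinarith [abs_nonneg r]
      have hz0 : z = 0 := by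
        have habs : |(z:ℝ)| < 1 := by
          have hez : (z:ℝ) = s - ((m:ℝ)+1) * r := by push_cast at hz ⊢; linarith
          rw [hez]
          calc |s - ((m:ℝ)+1)*r| ≤ |s| + |((m:ℝ)+1)*r| := abs_sub _ _
            _ < 1 := by linarith
        have h2 : |z| < 1 := by exact_mod_cast habs
        have h3 := abs_lt.mp h2
        omega
      have hs' : s = ((m:ℝ)+1) * r := by
        rw [hz0] at hz; push_cast at hz; linarith
      refine ⟨r, ?_, e⟩
      have : |((m:ℝ)+1) * r| ≤ 1/4 := by rw [← hs']; exact hs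
      rw [abs_mul, abs_of_pos (by positivity : (0:ℝ) < (m:ℝ)+1)] at this
      rw [le_div_iff₀ (by positivity : (0:ℝ) < 4 * ((m+1 : ℕ):ℝ))]
      push_cast
      nlinarith [abs_nonneg r]

lemma tpos_neg {t : AddCircle (1:ℝ)} (h : t ∈ Tpos) : -t ∈ Tpos := by
  rcases h with ⟨r, hr, e⟩
  refine ⟨-r, by simpa using hr, ?_⟩
  rw [← e]
  exact map_neg (QuotientAddGroup.mk' (AddSubgroup.zmultiples (1:ℝ))) r


/-- For a quasi-convex neighbourhood `U` of `0`, the family `{(1/n)U : n ≥ 1}` satisfies the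
axioms of a neighbourhood basis at `0` for a group topology; in particular
`(1/(2n))U + (1/(2n))U ⊆ (1/n)U`. -/
theorem oneOver_nhds_basis {G : Type*} [AddCommGroup G] [TopologicalSpace G]
    [IsTopologicalAddGroup G] (U : Set G) (hU : QuasiConvex U) (hU0 : U ∈ nhds (0 : G)) :
    (∀ n : ℕ, (0 : G) ∈ oneOver n U) ∧
    (∀ n : ℕ, -(oneOver n U) = oneOver n U) ∧
    (∀ n : ℕ, oneOver (2 * n) U + oneOver (2 * n) U ⊆ oneOver n U) ∧
    (∀ n m : ℕ, oneOver (max n m) U ⊆ oneOver n U ∩ oneOver m U) := by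
  have h0U : (0 : G) ∈ U := mem_of_mem_nhds hU0
  -- U is symmetric
  have hsym : ∀ x ∈ U, -x ∈ U := by
    intro x hx
    by_contra hnx
    rcases hU (-x) hnx with ⟨χ, hχ, hχx⟩
    have : χ (-x) = -(χ x) := map_neg χ.toAddMonoidHom x
    exact hχx (this ▸ tpos_neg (hχ x hx))
  refine ⟨?_, ?_, ?_, ?_⟩
  · intro n k _ _
    simpa using h0U
  · intro n
    ext x
    simp only [Set.mem_neg]
    constructor
    · intro hx k h1 h2
      simpa using hsym _ (hx k h1 h2)
    · intro hx k h1 h2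
      simpa using hsym _ (hx k h1 h2)
  · intro n z hz
    rcases hz with ⟨x, hx, y, hy, rfl⟩
    intro k h1 h2
    by_contra hk
    rcases hU _ hk with ⟨χ, hχ, hχk⟩
    have hn : 1 ≤ n := le_trans h1 h2
    have htx : ∀ j : ℕ, 1 ≤ j → j ≤ 2*n → j • (χ x) ∈ Tpos := by
      intro j hj1 hj2
      have := hχ _ (hx j hj1 hj2)
      rwa [map_nsmul χ j x] at this
    have hty : ∀ j : ℕ, 1 ≤ j → j ≤ 2*n → j • (χ y) ∈ Tpos := by
      intro j hj1 hj2
      have := hχ _ (hy j hj1 hj2)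
      rwa [map_nsmul χ j y] at this
    rcases tpos_chain (χ x) (2*n) (by omega) htx with ⟨r, hr, er⟩
    rcases tpos_chain (χ y) (2*n) (by omega) hty with ⟨s, hs, es⟩
    apply hχk
    have e1 : χ (k • (x + y)) = k • (χ x + χ y) := by
      rw [map_nsmul χ k (x+y), map_add]
    have e2 : (χ x + χ y) = ((r + s : ℝ) : AddCircle (1:ℝ)) := by
      rw [← er, ← es]
      exact (map_add (QuotientAddGroup.mk' (AddSubgroup.zmultiples (1:ℝ))) r s).symm
    rw [e1, e2, nsmul_coe]
    refine ⟨k * (r + s), ?_, rfl⟩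
    have hn' : (1:ℝ) ≤ n := by exact_mod_cast hn
    have hk' : (k:ℝ) ≤ n := by exact_mod_cast h2
    have hk0 : (0:ℝ) ≤ k := by positivity
    have h2n : (0:ℝ) < 4 * (2*(n:ℕ):ℝ) := by positivity
    push_cast at hr hs
    rw [le_div_iff₀ h2n] at hr hs
    rw [abs_mul, abs_of_nonneg hk0]
    have habs : |r + s| ≤ |r| + |s| := abs_add_le r s
    have : (k:ℝ) * |r + s| ≤ (n:ℝ) * (|r| + |s|) := by
      apply mul_le_mul hk' habs (abs_nonneg _) (by positivity)
    push_cast at hr hs this ⊢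
    nlinarith [abs_nonneg r, abs_nonneg s]
  · intro n m x hx
    exact ⟨fun k h1 h2 => hx k h1 (le_trans h2 (le_max_left n m)),
           fun k h1 h2 => hx k h1 (le_trans h2 (le_max_right n m))⟩
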